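/- There exists an absolute constant c₂ > 0 such that for every d ≥ 1 and every 0 < t ≤ √d/2, the number of integer lattice points in the d-dimensional Euclidean ball of radius t satisfies N(t,d) ≤ (c₂ d / t²)^{t²}. -/

import Mathlib

open Finset

lemma lattice_card_le (d m : ℕ) :
    Nat.card {k : Fin d → ℤ // ∑ i, (k i).natAbs ^ 2 ≤ m} ≤ (2 * d + m).choose m := by
  classical
  have key : ∀ k : Fin d → ℤ, (∑ i, (k i).natAbs ^ 2 ≤ m) → ∑ i, (k i).natAbs ≤ m :=
    fun k hk => le_trans (Finset.sum_le_sum fun i _ => Nat.le_self_pow two_ne_zero _) hk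
  let M : (Fin d → ℤ) → Multiset ((Fin d ⊕ Fin d) ⊕ Unit) := fun k =>
    (∑ i, ((k i).toNat • ({Sum.inl (Sum.inl i)} : Multiset ((Fin d ⊕ Fin d) ⊕ Unit))
        + (-(k i)).toNat • ({Sum.inl (Sum.inr i)} : Multiset ((Fin d ⊕ Fin d) ⊕ Unit))))
      + (m - ∑ i, (k i).natAbs) • ({Sum.inr ()} : Multiset ((Fin d ⊕ Fin d) ⊕ Unit))
  have hcnt1 : ∀ (k : Fin d → ℤ) (j : Fin d),
      Multiset.count (Sum.inl (Sum.inl j)) (M k) = (k j).toNat := by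
    intro k j
    simp [M, Multiset.count_sum', Multiset.count_nsmul, Multiset.count_singleton,
      Finset.sum_ite_eq']
  have hcnt2 : ∀ (k : Fin d → ℤ) (j : Fin d),
      Multiset.count (Sum.inl (Sum.inr j)) (M k) = (-(k j)).toNat := by
    intro k j
    simp [M, Multiset.count_sum', Multiset.count_nsmul, Multiset.count_singleton,
      Finset.sum_ite_eq']
  let F : {k : Fin d → ℤ // ∑ i, (k i).natAbs ^ 2 ≤ m} → Sym ((Fin d ⊕ Fin d) ⊕ Unit) m :=
    fun k => ⟨M k.1, by
      have hs := key k.1 k.2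
      have hcard : ∀ (s : Finset (Fin d)) (f : Fin d → Multiset ((Fin d ⊕ Fin d) ⊕ Unit)),
          Multiset.card (∑ i ∈ s, f i) = ∑ i ∈ s, Multiset.card (f i) := by
        intro s f
        induction s using Finset.cons_induction with
        | empty => simp
        | cons a s ha ih => simp [Finset.sum_cons, ih]
      simp only [M, Multiset.card_add, hcard, Multiset.card_nsmul, Multiset.card_singleton,
        mul_one]
      have : ∀ i, (k.1 i).toNat + (-(k.1 i)).toNat = (k.1 i).natAbs := fun i => by omega
      rw [Finset.sum_congr rfl fun i _ => this i]
      omega⟩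
  have hinj : Function.Injective F := by
    intro a b hab
    have h : M a.1 = M b.1 := congrArg Subtype.val hab
    ext j
    have h1 : (a.1 j).toNat = (b.1 j).toNat := by rw [← hcnt1 a.1 j, ← hcnt1 b.1 j, h]
    have h2 : (-(a.1 j)).toNat = (-(b.1 j)).toNat := by rw [← hcnt2 a.1 j, ← hcnt2 b.1 j, h]
    omega
  calc Nat.card {k : Fin d → ℤ // ∑ i, (k i).natAbs ^ 2 ≤ m}
      ≤ Nat.card (Sym ((Fin d ⊕ Fin d) ⊕ Unit) m) := Nat.card_le_card_of_injective F hinj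
    _ = (2 * d + m).choose m := by
        rw [Nat.card_eq_fintype_card, Sym.card_sym_eq_choose]
        congr 1
        simp [Fintype.card_sum]
        omega


/-- Number of lattice points `k ∈ ℤ^d` with `‖k‖₂ ≤ t`. -/
noncomputable def latticeCount (d : ℕ) (t : ℝ) : ℕ :=
  Nat.card {k : Fin d → ℤ // (∑ i, ((k i : ℝ))^2) ≤ t^2}

theorem stmt_9 :
    ∃ c₂ : ℝ, 0 < c₂ ∧ ∀ d : ℕ, 1 ≤ d → ∀ t : ℝ, 0 < t → t ≤ Real.sqrt d / 2 →
      (latticeCount d t : ℝ) ≤ (c₂ * d / t^2) ^ (t^2) := by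
  refine ⟨25, by norm_num, ?_⟩
  intro d hd t ht htd
  have hd1 : (1:ℝ) ≤ (d:ℝ) := by exact_mod_cast hd
  have ht2 : (0:ℝ) < t^2 := by positivity
  have htq : t^2 ≤ (d:ℝ)/4 := by
    have h := Real.sq_sqrt (show (0:ℝ) ≤ (d:ℝ) by positivity)
    nlinarith [Real.sqrt_nonneg (d:ℝ)]
  set m := ⌊t^2⌋₊ with hmdef
  have hcount : latticeCount d t = Nat.card {k : Fin d → ℤ // ∑ i, (k i).natAbs ^ 2 ≤ m} := by
    unfold latticeCount
    apply Nat.card_congr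
    apply Equiv.subtypeEquivRight
    intro k
    have hx : (∑ i, ((k i : ℝ))^2) = ((∑ i, (k i).natAbs ^ 2 : ℕ) : ℝ) := by
      push_cast [Nat.cast_natAbs]
      exact Finset.sum_congr rfl fun i _ => (sq_abs _).symm
    rw [hx]
    exact (Nat.le_floor_iff ht2.le).symm
  have hB1 : (1:ℝ) ≤ 25*(d:ℝ)/t^2 := by
    rw [le_div_iff₀ ht2]; nlinarith
  have hmt : (m:ℝ) ≤ t^2 := Nat.floor_le ht2.le
  have hC : ((2*d+m).choose m : ℝ) ≤ (25*(d:ℝ)/t^2)^m := by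
    rcases Nat.eq_zero_or_pos m with hm0 | hm1
    · simp [hm0]
    · have hmR : (1:ℝ) ≤ (m:ℝ) := by exact_mod_cast hm1
      have hmt2 : t^2 < (m:ℝ) + 1 := Nat.lt_floor_add_one _
      have hmd : (m:ℝ) ≤ (d:ℝ) := hmt.trans (by linarith)
      have h1 : ((2*d+m).choose m : ℝ) * (m.factorial : ℝ) ≤ ((2*(d:ℝ)+m))^m := by
        have := Nat.choose_le_pow_div (α := ℝ) m (2*d+m)
        rw [le_div_iff₀ (by positivity : (0:ℝ) < (m.factorial : ℝ))] at this
        calc ((2*d+m).choose m : ℝ) * (m.factorial : ℝ) ≤ ((2*d+m : ℕ) : ℝ)^m := this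
          _ = ((2*(d:ℝ)+m))^m := by push_cast; ring
      have h2 : ((m:ℝ))^m ≤ 3^m * (m.factorial : ℝ) := by
        have e1 : ((m:ℝ))^m / (m.factorial : ℝ) ≤ Real.exp m := by
          calc ((m:ℝ))^m / (m.factorial : ℝ)
              ≤ ∑ i ∈ Finset.range (m+1), (m:ℝ)^i / (i.factorial : ℝ) :=
                Finset.single_le_sum (f := fun i => (m:ℝ)^i / (i.factorial : ℝ))
                  (fun i _ => by positivity) (Finset.self_mem_range_succ m)
            _ ≤ Real.exp m := Real.sum_le_exp_of_nonneg (by positivity) _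
        have e2 : Real.exp (m:ℝ) ≤ 3^m := by
          rw [show ((m:ℝ)) = (m:ℕ) * (1:ℝ) by ring, Real.exp_nat_mul]
          exact pow_le_pow_left₀ (Real.exp_pos 1).le
            (by linarith [Real.exp_one_lt_d9]) m
        rw [div_le_iff₀ (by positivity : (0:ℝ) < (m.factorial : ℝ))] at e1
        calc ((m:ℝ))^m ≤ Real.exp m * (m.factorial : ℝ) := e1
          _ ≤ 3^m * (m.factorial : ℝ) := by gcongr
      have hmpow : (0:ℝ) < ((m:ℝ))^m := by positivity
      rw [← mul_le_mul_iff_of_pos_right hmpow]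
      have hfac : (0:ℝ) < (m.factorial : ℝ) := by positivity
      calc ((2*d+m).choose m : ℝ) * ((m:ℝ))^m
          ≤ ((2*d+m).choose m : ℝ) * (3^m * (m.factorial : ℝ)) := by
            have : (0:ℝ) ≤ ((2*d+m).choose m : ℝ) := by positivity
            gcongr
        _ = (((2*d+m).choose m : ℝ) * (m.factorial : ℝ)) * 3^m := by ring
        _ ≤ ((2*(d:ℝ)+m))^m * 3^m := by gcongr
        _ ≤ (3*(d:ℝ))^m * 3^m := by
            gcongr
            linarith
        _ = (9*(d:ℝ))^m := by rw [← mul_pow]; ring_nf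
        _ ≤ (25*(d:ℝ)/t^2 * m)^m := by
            apply pow_le_pow_left₀ (by positivity)
            rw [div_mul_eq_mul_div, le_div_iff₀ ht2]
            nlinarith
        _ = (25*(d:ℝ)/t^2)^m * ((m:ℝ))^m := mul_pow _ _ _
  calc (latticeCount d t : ℝ) ≤ ((2*d+m).choose m : ℝ) := by
        rw [hcount]; exact_mod_cast lattice_card_le d m
    _ ≤ (25*(d:ℝ)/t^2)^m := hC
    _ = (25*(d:ℝ)/t^2) ^ ((m:ℕ):ℝ) := (Real.rpow_natCast _ m).symm
    _ ≤ (25*(d:ℝ)/t^2) ^ (t^2) := Real.rpow_le_rpow_of_exponent_le hB1 hmt
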